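/- Let G = (V, E) be a finite simple undirected graph with independence number α₁. Let q : V → ℝ satisfy q(v) ≥ 0 for all v ∈ V, and define Q(v) := ∑_{w ∈ N(v)} q(w), where N(v) denotes the closed neighborhood of v. Assume Q(v) > 0 for all v ∈ V. Then ∑_{v ∈ V} q(v)/Q(v) ≤ α₁. -/

import Mathlib

open Finset

lemma stmt5_aux {V : Type*} [Fintype V] [DecidableEq V] (G : SimpleGraph V)
    [DecidableRel G.Adj] (q : V → ℝ) (hq : ∀ v, 0 ≤ q v) :
    ∀ n (s : Finset V), s.card ≤ n →
      ∃ t : Finset V, t ⊆ s ∧ (∀ v ∈ t, ∀ w ∈ t, ¬ G.Adj v w) ∧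
        ∑ v ∈ s, q v / (∑ w ∈ (insert v (G.neighborFinset v)) ∩ s, q w) ≤ (t.card : ℝ) := by
  intro n
  induction n with
  | zero =>
    intro s hs
    have : s = ∅ := Finset.card_eq_zero.mp (Nat.le_zero.mp hs)
    subst this
    exact ⟨∅, Finset.Subset.refl _, by simp, by simp⟩
  | succ n ih =>
    intro s hs
    set P := s.filter (fun v => 0 < q v) with hP
    by_cases hPne : P.Nonempty
    · obtain ⟨u, huP, humin⟩ := Finset.exists_min_image P
        (fun v => ∑ w ∈ (insert v (G.neighborFinset v)) ∩ s, q w) hPne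
      have hus : u ∈ s := (Finset.mem_filter.mp huP).1
      have hqu : 0 < q u := (Finset.mem_filter.mp huP).2
      set Nu := insert u (G.neighborFinset u) with hNu
      set Qu := ∑ w ∈ Nu ∩ s, q w with hQu
      have huNu : u ∈ Nu ∩ s := Finset.mem_inter.mpr ⟨Finset.mem_insert_self _ _, hus⟩
      have hQupos : 0 < Qu := lt_of_lt_of_le hqu
        (Finset.single_le_sum (fun w _ => hq w) huNu)
      set s' := s \ Nu with hs'
      have hs'card : s'.card ≤ n := by
        have h1 : s'.card < s.card := Finset.card_lt_card
          ⟨Finset.sdiff_subset, fun hsub => (Finset.mem_sdiff.mp (hsub hus)).2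
            (Finset.mem_insert_self _ _)⟩
        omega
      obtain ⟨t', ht'sub, ht'ind, ht'sum⟩ := ih s' hs'card
      have hut' : u ∉ t' := fun h => (Finset.mem_sdiff.mp (ht'sub h)).2
        (Finset.mem_insert_self _ _)
      refine ⟨insert u t', ?_, ?_, ?_⟩
      · intro v hv
        rcases Finset.mem_insert.mp hv with rfl | hv
        · exact hus
        · exact Finset.sdiff_subset (ht'sub hv)
      · intro v hv w hw
        have hkey : ∀ x ∈ t', ¬ G.Adj u x := by
          intro x hx hadj
          exact (Finset.mem_sdiff.mp (ht'sub hx)).2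
            (Finset.mem_insert_of_mem ((G.mem_neighborFinset u x).mpr hadj))
        intro hadj
        rcases Finset.mem_insert.mp hv with hv | hv <;>
          rcases Finset.mem_insert.mp hw with hw | hw
        · rw [hv, hw] at hadj; exact G.loopless.irrefl u hadj
        · rw [hv] at hadj; exact hkey w hw hadj
        · rw [hw] at hadj; exact hkey v hv hadj.symm
        · exact ht'ind v hv w hw hadj
      · -- sum bound
        have hsplit : ∑ v ∈ s ∩ Nu, (fun v => q v / (∑ w ∈ (insert v (G.neighborFinset v)) ∩ s, q w)) v
            + ∑ v ∈ s \ Nu, (fun v => q v / (∑ w ∈ (insert v (G.neighborFinset v)) ∩ s, q w)) v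
            = ∑ v ∈ s, q v / (∑ w ∈ (insert v (G.neighborFinset v)) ∩ s, q w) :=
          Finset.sum_inter_add_sum_sdiff s Nu _
        have hpart1 : ∑ v ∈ s ∩ Nu, q v / (∑ w ∈ (insert v (G.neighborFinset v)) ∩ s, q w) ≤ 1 := by
          have hterm : ∀ v ∈ s ∩ Nu,
              q v / (∑ w ∈ (insert v (G.neighborFinset v)) ∩ s, q w) ≤ q v / Qu := by
            intro v hv
            rcases eq_or_lt_of_le (hq v) with hz | hpos
            · rw [← hz]; simp
            · have hvP : v ∈ P := Finset.mem_filter.mpr ⟨(Finset.mem_inter.mp hv).1, hpos⟩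
              have hle := humin v hvP
              exact div_le_div_of_nonneg_left (hq v) hQupos hle
          calc ∑ v ∈ s ∩ Nu, q v / (∑ w ∈ (insert v (G.neighborFinset v)) ∩ s, q w)
              ≤ ∑ v ∈ s ∩ Nu, q v / Qu := Finset.sum_le_sum hterm
            _ = (∑ v ∈ s ∩ Nu, q v) / Qu := by rw [Finset.sum_div]
            _ = Qu / Qu := by rw [hQu, Finset.inter_comm]
            _ = 1 := div_self (ne_of_gt hQupos)
        have hpart2 : ∑ v ∈ s \ Nu, q v / (∑ w ∈ (insert v (G.neighborFinset v)) ∩ s, q w)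
            ≤ (t'.card : ℝ) := by
          refine le_trans (Finset.sum_le_sum ?_) ht'sum
          intro v hv
          set A := (insert v (G.neighborFinset v)) ∩ s' with hA
          set B := (insert v (G.neighborFinset v)) ∩ s with hB
          have hAB : A ⊆ B := Finset.inter_subset_inter_left Finset.sdiff_subset
          have hsum_le : ∑ w ∈ A, q w ≤ ∑ w ∈ B, q w :=
            Finset.sum_le_sum_of_subset_of_nonneg hAB (fun w _ _ => hq w)
          have hAnn : (0:ℝ) ≤ ∑ w ∈ A, q w := Finset.sum_nonneg (fun w _ => hq w)
          rcases eq_or_lt_of_le hAnn with hz | hpos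
          · have hvA : v ∈ A := Finset.mem_inter.mpr ⟨Finset.mem_insert_self _ _, hv⟩
            have : q v = 0 := le_antisymm (by
              calc q v ≤ ∑ w ∈ A, q w := Finset.single_le_sum (fun w _ => hq w) hvA
                _ = 0 := hz.symm) (hq v)
            rw [this]; simp
          · exact div_le_div_of_nonneg_left (hq v) hpos hsum_le
        calc ∑ v ∈ s, q v / (∑ w ∈ (insert v (G.neighborFinset v)) ∩ s, q w)
            = ∑ v ∈ s ∩ Nu, q v / (∑ w ∈ (insert v (G.neighborFinset v)) ∩ s, q w)
              + ∑ v ∈ s \ Nu, q v / (∑ w ∈ (insert v (G.neighborFinset v)) ∩ s, q w) :=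
              hsplit.symm
          _ ≤ _ := by
            calc ∑ v ∈ s ∩ Nu, q v / (∑ w ∈ (insert v (G.neighborFinset v)) ∩ s, q w)
              + ∑ v ∈ s \ Nu, q v / (∑ w ∈ (insert v (G.neighborFinset v)) ∩ s, q w)
            ≤ 1 + (t'.card : ℝ) := add_le_add hpart1 hpart2
          _ = ((insert u t').card : ℝ) := by
              rw [Finset.card_insert_of_notMem hut']; push_cast; ring
    · refine ⟨∅, Finset.empty_subset _, by simp, ?_⟩
      have : ∀ v ∈ s, q v / (∑ w ∈ (insert v (G.neighborFinset v)) ∩ s, q w) = 0 := by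
        intro v hv
        have : q v = 0 := by
          by_contra h
          exact hPne ⟨v, Finset.mem_filter.mpr ⟨hv, lt_of_le_of_ne (hq v) (Ne.symm h)⟩⟩
        rw [this, zero_div]
      rw [Finset.sum_congr rfl this]
      simp

theorem stmt5 {V : Type*} [Fintype V] [DecidableEq V] (G : SimpleGraph V) [DecidableRel G.Adj]
    (α₁ : ℕ)
    (hα : IsGreatest
      {n : ℕ | ∃ s : Finset V, s.card = n ∧ ∀ v ∈ s, ∀ w ∈ s, ¬ G.Adj v w} α₁)
    (q : V → ℝ) (hq : ∀ v, 0 ≤ q v)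
    (Q : V → ℝ) (hQdef : ∀ v, Q v = ∑ w ∈ insert v (G.neighborFinset v), q w)
    (hQpos : ∀ v, 0 < Q v) :
    ∑ v, q v / Q v ≤ (α₁ : ℝ) := by
  obtain ⟨t, -, htind, htsum⟩ := stmt5_aux G q hq (Finset.univ : Finset V).card Finset.univ le_rfl
  have hmem : t.card ∈ {n : ℕ | ∃ s : Finset V, s.card = n ∧ ∀ v ∈ s, ∀ w ∈ s, ¬ G.Adj v w} :=
    ⟨t, rfl, htind⟩
  have hle : t.card ≤ α₁ := hα.2 hmem
  calc ∑ v, q v / Q v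
      = ∑ v ∈ Finset.univ, q v / (∑ w ∈ (insert v (G.neighborFinset v)) ∩ Finset.univ, q w) := by
        apply Finset.sum_congr rfl
        intro v _
        rw [hQdef v, Finset.inter_univ]
    _ ≤ (t.card : ℝ) := htsum
    _ ≤ (α₁ : ℝ) := Nat.cast_le.mpr hle
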